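/- Let H ∈ ℝ^{m×d} have a singular value decomposition H = U·Σ·Vᵀ with U, V orthogonal and singular values s₁, …, s_{min(m,d)} ≥ 0, let η₂ > 0 be fixed, and let m₀ ∈ ℝ^d, y ∈ ℝ^m. For η₁ > 0 set W(η₁) := η₁·H·Hᵀ + η₂·I and Y(η₁) := I + Hᵀ·W(η₁)⁻¹·H, and let x*(η₁) := Y(η₁)⁻¹·(m₀ + Hᵀ·W(η₁)⁻¹·y). Then x*(η₁) tends to m₀ as η₁ → +∞; i.e., as η₁ → ∞ the MAS estimate reduces to the unconditional denoiser output m₀. -/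

import Mathlib

open Matrix

/-- **Large-`η₁` limit of MAS: reduction to the unconditional denoiser output.**
If `H = U S Vᵀ` is an SVD and `η₂ > 0` is fixed, then with `W(η₁) := η₁ H Hᵀ + η₂ I`
and `Y(η₁) := I + Hᵀ W(η₁)⁻¹ H`, the MAS estimate
`x*(η₁) := Y(η₁)⁻¹ (m₀ + Hᵀ W(η₁)⁻¹ y)` tends to `m₀` as `η₁ → +∞`. -/
theorem mas_tendsto_prior {m d : ℕ} (H : Matrix (Fin m) (Fin d) ℝ)
    (U : Matrix (Fin m) (Fin m) ℝ) (V : Matrix (Fin d) (Fin d) ℝ)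
    (s : ℕ → ℝ)
    (hU : Uᵀ * U = 1) (hV : Vᵀ * V = 1)
    (hs : ∀ i, 0 ≤ s i) (hs0 : ∀ i, min m d ≤ i → s i = 0)
    (S : Matrix (Fin m) (Fin d) ℝ)
    (hS : S = Matrix.of fun (i : Fin m) (j : Fin d) => if (i : ℕ) = (j : ℕ) then s (i : ℕ) else 0)
    (hH : H = U * S * Vᵀ)
    (η₂ : ℝ) (hη₂ : 0 < η₂)
    (m₀ : Fin d → ℝ) (y : Fin m → ℝ) :
    Filter.Tendsto
      (fun η₁ : ℝ =>
        ((1 : Matrix (Fin d) (Fin d) ℝ) + Hᵀ * (η₁ • (H * Hᵀ) + η₂ • 1)⁻¹ * H)⁻¹ *ᵥ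
          (m₀ + Hᵀ *ᵥ ((η₁ • (H * Hᵀ) + η₂ • 1)⁻¹ *ᵥ y)))
      Filter.atTop (nhds m₀) := by
  classical
  have hUU : U * Uᵀ = 1 := mul_eq_one_comm.mp hU
  have hHT : Hᵀ = V * Sᵀ * Uᵀ := by
    rw [hH]; simp [Matrix.transpose_mul, Matrix.mul_assoc]
  have hSS : S * Sᵀ = Matrix.diagonal (fun i : Fin m => s (i : ℕ) ^ 2) := by
    subst hS
    ext i k
    rw [Matrix.mul_apply]
    simp only [Matrix.of_apply, Matrix.transpose_apply]
    by_cases hik : i = k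
    · subst hik
      rw [Matrix.diagonal_apply_eq]
      by_cases hi : (i : ℕ) < d
      · rw [Finset.sum_eq_single (⟨(i : ℕ), hi⟩ : Fin d)]
        · simp [pow_two]
        · intro j _ hj
          have : (i : ℕ) ≠ (j : ℕ) := fun h => hj (by ext; exact h.symm)
          simp [this]
        · simp
      · have h0 : s (i : ℕ) = 0 :=
          hs0 _ (le_trans (min_le_right m d) (le_of_not_gt hi))
        simp [h0]
    · have hik' : (i : ℕ) ≠ (k : ℕ) := fun h => hik (Fin.ext h)
      rw [Matrix.diagonal_apply_ne _ hik]
      apply Finset.sum_eq_zero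
      intro j _
      by_cases h1 : (i : ℕ) = (j : ℕ)
      · have : (k : ℕ) ≠ (j : ℕ) := fun h => hik' (h1.trans h.symm)
        simp [this]
      · simp [h1]
  have hHHT : H * Hᵀ = U * Matrix.diagonal (fun i : Fin m => s (i : ℕ) ^ 2) * Uᵀ := by
    rw [hHT, hH]
    calc U * S * Vᵀ * (V * Sᵀ * Uᵀ)
        = U * (S * ((Vᵀ * V) * (Sᵀ * Uᵀ))) := by simp [Matrix.mul_assoc]
      _ = U * ((S * Sᵀ) * Uᵀ) := by rw [hV, Matrix.one_mul, Matrix.mul_assoc]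
      _ = U * Matrix.diagonal (fun i : Fin m => s (i : ℕ) ^ 2) * Uᵀ := by
          rw [hSS, Matrix.mul_assoc]
  have hW : ∀ η₁ : ℝ, η₁ • (H * Hᵀ) + η₂ • 1
      = U * Matrix.diagonal (fun i : Fin m => η₁ * s (i : ℕ) ^ 2 + η₂) * Uᵀ := by
    intro η₁
    have hD : Matrix.diagonal (fun i : Fin m => η₁ * s (i : ℕ) ^ 2 + η₂)
        = η₁ • Matrix.diagonal (fun i : Fin m => s (i : ℕ) ^ 2) + η₂ • 1 := by
      ext i j
      by_cases h : i = j
      · subst h; simp [Matrix.diagonal_apply_eq, Matrix.one_apply_eq]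
      · simp [Matrix.diagonal_apply_ne _ h, Matrix.one_apply_ne h]
    rw [hHHT, hD]
    simp [Matrix.mul_add, Matrix.add_mul, Matrix.mul_smul, Matrix.smul_mul, hUU,
      Matrix.mul_assoc]
  have hne : ∀ (η₁ : ℝ), 0 ≤ η₁ → ∀ i : Fin m, η₁ * s (i : ℕ) ^ 2 + η₂ ≠ 0 := by
    intro η₁ hη₁ i
    have : 0 < η₁ * s (i : ℕ) ^ 2 + η₂ :=
      add_pos_of_nonneg_of_pos (mul_nonneg hη₁ (sq_nonneg _)) hη₂
    exact ne_of_gt this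
  have hWinv : ∀ η₁ : ℝ, 0 ≤ η₁ → (η₁ • (H * Hᵀ) + η₂ • 1)⁻¹
      = U * Matrix.diagonal (fun i : Fin m => (η₁ * s (i : ℕ) ^ 2 + η₂)⁻¹) * Uᵀ := by
    intro η₁ hη₁
    apply Matrix.inv_eq_right_inv
    rw [hW]
    calc U * Matrix.diagonal (fun i : Fin m => η₁ * s (i : ℕ) ^ 2 + η₂) * Uᵀ *
          (U * Matrix.diagonal (fun i : Fin m => (η₁ * s (i : ℕ) ^ 2 + η₂)⁻¹) * Uᵀ)
        = U * (Matrix.diagonal (fun i : Fin m => η₁ * s (i : ℕ) ^ 2 + η₂) *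
            ((Uᵀ * U) * (Matrix.diagonal (fun i : Fin m => (η₁ * s (i : ℕ) ^ 2 + η₂)⁻¹) * Uᵀ))) := by
          simp [Matrix.mul_assoc]
      _ = 1 := by
          rw [hU, one_mul, ← Matrix.mul_assoc (Matrix.diagonal _), Matrix.diagonal_mul_diagonal]
          have : (fun i : Fin m => (η₁ * s (i : ℕ) ^ 2 + η₂) * (η₁ * s (i : ℕ) ^ 2 + η₂)⁻¹)
              = fun _ => (1 : ℝ) := by
            funext i; exact mul_inv_cancel₀ (hne η₁ hη₁ i)
          rw [this, Matrix.diagonal_one, one_mul, hUU]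
  -- the key tendsto of G η₁ := Hᵀ * W⁻¹
  set G : ℝ → Matrix (Fin d) (Fin m) ℝ :=
    fun η₁ => Hᵀ * (η₁ • (H * Hᵀ) + η₂ • 1)⁻¹ with hGdef
  have hGeq : ∀ η₁ : ℝ, 0 ≤ η₁ →
      G η₁ = V * (Sᵀ * Matrix.diagonal (fun i : Fin m => (η₁ * s (i : ℕ) ^ 2 + η₂)⁻¹)) * Uᵀ := by
    intro η₁ hη₁
    rw [hGdef]
    simp only
    rw [hWinv _ hη₁, hHT]
    calc V * Sᵀ * Uᵀ * (U * Matrix.diagonal (fun i : Fin m => (η₁ * s (i : ℕ) ^ 2 + η₂)⁻¹) * Uᵀ)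
        = V * (Sᵀ * ((Uᵀ * U) * (Matrix.diagonal (fun i : Fin m => (η₁ * s (i : ℕ) ^ 2 + η₂)⁻¹) * Uᵀ))) := by
          simp [Matrix.mul_assoc]
      _ = _ := by rw [hU, one_mul, Matrix.mul_assoc, Matrix.mul_assoc]
  have hmid : Filter.Tendsto
      (fun η₁ : ℝ => Sᵀ * Matrix.diagonal (fun i : Fin m => (η₁ * s (i : ℕ) ^ 2 + η₂)⁻¹))
      Filter.atTop (nhds 0) := by
    refine tendsto_pi_nhds.2 ?_
    intro j
    refine tendsto_pi_nhds.2 ?_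
    intro i
    have hentry : ∀ η₁ : ℝ,
        (Sᵀ * Matrix.diagonal (fun i : Fin m => (η₁ * s (i : ℕ) ^ 2 + η₂)⁻¹)) j i
          = (if (i : ℕ) = (j : ℕ) then s (i : ℕ) else 0) * (η₁ * s (i : ℕ) ^ 2 + η₂)⁻¹ := by
      intro η₁
      rw [Matrix.mul_diagonal, Matrix.transpose_apply, hS]
      simp
    simp only [hentry, Pi.zero_apply, Matrix.zero_apply]
    by_cases h0 : s (i : ℕ) = 0
    · simp [h0]
    · have hpos : 0 < s (i : ℕ) ^ 2 := by positivity
      have h1 : Filter.Tendsto (fun η₁ : ℝ => η₁ * s (i : ℕ) ^ 2 + η₂) Filter.atTop Filter.atTop :=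
        Filter.tendsto_atTop_add_const_right _ _ (Filter.Tendsto.atTop_mul_const hpos Filter.tendsto_id)
      have h2 : Filter.Tendsto (fun η₁ : ℝ => (η₁ * s (i : ℕ) ^ 2 + η₂)⁻¹) Filter.atTop (nhds 0) :=
        Filter.Tendsto.inv_tendsto_atTop h1
      have := h2.const_mul (if (i : ℕ) = (j : ℕ) then s (i : ℕ) else 0)
      simpa using this
  have hG : Filter.Tendsto G Filter.atTop (nhds 0) := by
    have hc : Continuous fun M : Matrix (Fin d) (Fin m) ℝ => V * M * Uᵀ :=
      (continuous_const.matrix_mul continuous_id).matrix_mul continuous_const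
    have h3 : Filter.Tendsto
        (fun η₁ : ℝ => V * (Sᵀ * Matrix.diagonal (fun i : Fin m => (η₁ * s (i : ℕ) ^ 2 + η₂)⁻¹)) * Uᵀ)
        Filter.atTop (nhds 0) := by
      have := (hc.tendsto 0).comp hmid
      simpa [Function.comp_def] using this
    refine h3.congr' ?_
    filter_upwards [Filter.eventually_ge_atTop (0 : ℝ)] with η₁ hη₁
    exact (hGeq η₁ hη₁).symm
  have hY : Filter.Tendsto (fun η₁ : ℝ => (1 : Matrix (Fin d) (Fin d) ℝ) + G η₁ * H)
      Filter.atTop (nhds 1) := by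
    have hc : Continuous fun M : Matrix (Fin d) (Fin m) ℝ =>
        (1 : Matrix (Fin d) (Fin d) ℝ) + M * H :=
      continuous_const.add (continuous_id.matrix_mul continuous_const)
    have := (hc.tendsto 0).comp hG
    simpa [Function.comp_def] using this
  have hYinv : Filter.Tendsto (fun η₁ : ℝ => ((1 : Matrix (Fin d) (Fin d) ℝ) + G η₁ * H)⁻¹)
      Filter.atTop (nhds 1) := by
    have h1 : ContinuousAt Inv.inv (1 : Matrix (Fin d) (Fin d) ℝ) := by
      apply continuousAt_matrix_inv
      have := NormedRing.inverse_continuousAt (1 : ℝˣ)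
      simpa using this
    have := h1.tendsto.comp hY
    simpa [Function.comp_def] using this
  have hpair : Filter.Tendsto
      (fun η₁ : ℝ => (((1 : Matrix (Fin d) (Fin d) ℝ) + G η₁ * H)⁻¹, G η₁))
      Filter.atTop (nhds ((1 : Matrix (Fin d) (Fin d) ℝ), (0 : Matrix (Fin d) (Fin m) ℝ))) :=
    hYinv.prodMk_nhds hG
  have hc : Continuous fun p : Matrix (Fin d) (Fin d) ℝ × Matrix (Fin d) (Fin m) ℝ =>
      p.1 *ᵥ (m₀ + p.2 *ᵥ y) :=
    continuous_fst.matrix_mulVec (continuous_const.add (continuous_snd.matrix_mulVec continuous_const))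
  have hmain := (hc.tendsto _).comp hpair
  simp only [Function.comp] at hmain
  have : ((1 : Matrix (Fin d) (Fin d) ℝ) *ᵥ (m₀ + (0 : Matrix (Fin d) (Fin m) ℝ) *ᵥ y)) = m₀ := by
    simp
  rw [this] at hmain
  refine hmain.congr fun η₁ => ?_
  simp only [Function.comp_apply, hGdef]
  rw [Matrix.mulVec_mulVec]
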